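/- Let A be a 2-integral probability group with exactly three elements. Then exactly one of the following holds: (i) all values of p lie in {0,1}, every element has size 1, and the induced operation makes A a cyclic group of order 3 (so A is the probability group A(ℂℤ₃)); or (ii) A = {1, x, y} with x⁻¹ = x, y⁻¹ = y, s(x) = 4, s(y) = 1, p(x·x=1) = 1/4, p(x·x=x) = 1/2, p(x·x=y) = 1/4, p(x·y=x) = p(y·x=x) = 1, p(y·y=1) = 1, and all other probabilities zero (so A is the probability group A(ℂS₃) of irreducible characters of S₃). -/
import Mathlib


/-- A probability group (Harrison): a set `A` with a distinguished element `one`,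
an inverse map `inv`, and a probability map `p` satisfying axioms (1)-(6). -/
structure ProbabilityGroup (A : Type*) where
  /-- the probability map: `p a b c` is `p(a·b = c)` -/
  p : A → A → A → ℝ
  /-- the unit element -/
  one : A
  /-- the inverse map -/
  inv : A → A
  p_nonneg : ∀ a b c, 0 ≤ p a b c
  finite_support : ∀ a b, {c | p a b c ≠ 0}.Finite
  sum_eq_one : ∀ a b, ∑ᶠ c, p a b c = 1
  assoc : ∀ a b c d, ∑ᶠ x, p a b x * p x c d = ∑ᶠ y, p a y d * p b c y
  one_mul : ∀ a, p one a a = 1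
  mul_one : ∀ a, p a one a = 1
  inv_pos : ∀ a, 0 < p a (inv a) one
  inv_unique : ∀ a b, 0 < p a b one → b = inv a
  p_inv : ∀ a b c, p a b c = p (inv b) (inv a) (inv c)
  inv_symm : ∀ a, p a (inv a) one = p (inv a) a one

/-- The size `s(a) = 1 / p(a·a⁻¹ = 1)` of an element of a probability group. -/
noncomputable def ProbabilityGroup.s {A : Type*} (P : ProbabilityGroup A) (a : A) : ℝ :=
  1 / P.p a (P.inv a) P.one

/-- A probability group is 2-integral if each `s(a)^(1/2)` is a positive integer and
`p(a·b=c) s(a)^(1/2) s(b)^(1/2) / s(c)^(1/2)` is always a non-negative integer. -/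
def ProbabilityGroup.TwoIntegral {A : Type*} (P : ProbabilityGroup A) : Prop :=
  (∀ a, ∃ n : ℕ, 0 < n ∧ Real.sqrt (P.s a) = n) ∧
  (∀ a b c, ∃ n : ℕ,
    P.p a b c * Real.sqrt (P.s a) * Real.sqrt (P.s b) / Real.sqrt (P.s c) = n)

/-- The probability-map data of `A(ℂS₃)` on `{1, a, b}` (with `a` the class of the
2-dimensional character and `b` the sign character). -/
def ProbabilityGroup.S3spec {A : Type*} (P : ProbabilityGroup A) (a b : A) : Prop :=
  P.s a = 4 ∧ P.s b = 1 ∧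
  P.p a a P.one = 1 / 4 ∧ P.p a a a = 1 / 2 ∧ P.p a a b = 1 / 4 ∧
  P.p a b a = 1 ∧ P.p b a a = 1 ∧ P.p a b b = 0 ∧ P.p b a b = 0 ∧
  P.p a b P.one = 0 ∧ P.p b a P.one = 0 ∧
  P.p b b P.one = 1 ∧ P.p b b a = 0 ∧ P.p b b b = 0

lemma prob_dioph (n k m1 m2 m3 m4 : ℕ) (hn : 0 < n) (hk : 0 < k)
    (e1 : 1 + m1*n + m2*k = n*n) (e2 : 1 + m3*n + m4*k = k*k)
    (e3 : m2*n + m3*k = n*k) :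
    (n = 2 ∧ k = 1 ∧ m1 = 1 ∧ m2 = 1 ∧ m3 = 0 ∧ m4 = 0) ∨
    (n = 1 ∧ k = 2 ∧ m1 = 0 ∧ m2 = 0 ∧ m3 = 1 ∧ m4 = 1) := by
  have hcop : Nat.Coprime n k := by
    have hd : Nat.gcd n k ∣ m1*n + m2*k :=
      Dvd.dvd.add (Dvd.dvd.mul_left (Nat.gcd_dvd_left n k) m1)
        (Dvd.dvd.mul_left (Nat.gcd_dvd_right n k) m2)
    have hd2 : Nat.gcd n k ∣ (m1*n + m2*k) + 1 := by
      have h : (m1*n + m2*k) + 1 = n*n := by omega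
      rw [h]
      exact Dvd.dvd.mul_left (Nat.gcd_dvd_left n k) n
    exact Nat.eq_one_of_dvd_one ((Nat.dvd_add_right hd).mp hd2)
  have hnm3 : n ∣ m3 := by
    have h1 : n ∣ m3 * k := by
      have hd : n ∣ m2*n + m3*k := e3 ▸ Dvd.intro k rfl
      exact (Nat.dvd_add_right (dvd_mul_left n m2)).mp hd
    exact hcop.dvd_of_dvd_mul_right h1
  have hm3le : m3 ≤ n := by nlinarith
  rcases Nat.eq_zero_or_pos m3 with h3 | h3
  · -- m3 = 0 : S3 with n = 2, k = 1
    subst h3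
    simp only [zero_mul, mul_zero, add_zero, zero_add] at e2 e3
    have hm2 : m2 = k := by
      have h : m2 * n = n * k := by omega
      nlinarith
    rw [hm2] at e1
    have hk1 : k = 1 := by
      have hdk : k ∣ 1 := by
        have h1 : k ∣ m4*k + 1 := by
          have h : m4*k + 1 = k*k := by omega
          rw [h]; exact Dvd.intro k rfl
        exact (Nat.dvd_add_right (dvd_mul_left k m4)).mp h1
      exact Nat.eq_one_of_dvd_one hdk
    subst hk1
    have hn2 : n = 2 := by
      have hdn : n ∣ 2 := by
        have h1 : n ∣ m1*n + 2 := by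
          have h : m1*n + 2 = n*n := by omega
          rw [h]; exact Dvd.intro n rfl
        exact (Nat.dvd_add_right (dvd_mul_left n m1)).mp h1
      have := Nat.le_of_dvd (by norm_num) hdn
      interval_cases n <;> omega
    subst hn2
    left; omega
  · -- m3 > 0 : Z3-like, n = 1, k = 2
    have hm3 : m3 = n := by
      rcases hnm3 with ⟨c, hc'⟩
      rcases Nat.eq_zero_or_pos c with hc | hc
      · exact absurd h3 (by simp [hc', hc])
      · nlinarith
    rw [hm3] at e2 e3
    have hm2 : m2 = 0 := by nlinarith
    rw [hm2] at e1
    have hn1 : n = 1 := by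
      have hdn : n ∣ 1 := by
        have h1 : n ∣ m1*n + 1 := by
          have h : m1*n + 1 = n*n := by omega
          rw [h]; exact Dvd.intro n rfl
        exact (Nat.dvd_add_right (dvd_mul_left n m1)).mp h1
      exact Nat.eq_one_of_dvd_one hdn
    rw [hn1] at e2 e1
    have hk2 : k = 2 := by
      have hdk : k ∣ 2 := by
        have h1 : k ∣ m4*k + 2 := by
          have h : m4*k + 2 = k*k := by omega
          rw [h]; exact Dvd.intro k rfl
        exact (Nat.dvd_add_right (dvd_mul_left k m4)).mp h1
      have := Nat.le_of_dvd (by norm_num) hdk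
      interval_cases k <;> omega
    subst hk2
    right; omega

lemma odd_sq_aux (n m : ℕ) (hn : 0 < n) (e : 1 + m*n + m*n = n*n) : n = 1 ∧ m = 0 := by
  have hdn : n ∣ 1 := by
    have h1 : n ∣ (m*n + m*n) + 1 := by
      have h : (m*n + m*n) + 1 = n*n := by omega
      rw [h]; exact Dvd.intro n rfl
    exact (Nat.dvd_add_right (Dvd.dvd.add (dvd_mul_left n m) (dvd_mul_left n m))).mp h1
  have hn1 : n = 1 := Nat.eq_one_of_dvd_one hdn
  subst hn1
  omega

set_option maxHeartbeats 4000000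

/-- Classification: a 2-integral probability group with exactly three elements is either
(i) a cyclic group of order 3 (i.e. `A(ℂℤ₃)`: all probabilities in `{0,1}`, all sizes 1,
and the induced operation is a group operation with no element of order 2), or
(ii) the probability group `A(ℂS₃)` of irreducible characters of `S₃` — and exactly one
of the two cases occurs. -/
theorem twoIntegral_card_three_classification {A : Type*} [Fintype A]
    (P : ProbabilityGroup A) (hcard : Fintype.card A = 3) (h2 : P.TwoIntegral) :
    Xor'
      ((∀ a b c, P.p a b c = 0 ∨ P.p a b c = 1) ∧ (∀ a, P.s a = 1) ∧
        ∃ mul : A → A → A,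
          (∀ a b, P.p a b (mul a b) = 1) ∧
          (∀ a b c, mul (mul a b) c = mul a (mul b c)) ∧
          (∀ a, mul P.one a = a) ∧ (∀ a, mul a P.one = a) ∧
          (∀ a, mul a (P.inv a) = P.one) ∧
          (∀ g, g ≠ P.one → mul g g ≠ P.one))
      (∃ x y : A, x ≠ P.one ∧ y ≠ P.one ∧ x ≠ y ∧
        (∀ z : A, z = P.one ∨ z = x ∨ z = y) ∧
        P.inv x = x ∧ P.inv y = y ∧ P.S3spec x y) := by
  classical
  obtain ⟨a, b, hab, hs⟩ := Finset.card_eq_two.mp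
    (show (Finset.univ.erase P.one).card = 2 by
      rw [Finset.card_erase_of_mem (Finset.mem_univ _)]
      simp [hcard])
  have ha1 : a ≠ P.one := by
    have : a ∈ Finset.univ.erase P.one := hs ▸ by simp
    exact (Finset.mem_erase.mp this).1
  have hb1 : b ≠ P.one := by
    have : b ∈ Finset.univ.erase P.one := hs ▸ by simp
    exact (Finset.mem_erase.mp this).1
  have htri : ∀ z : A, z = P.one ∨ z = a ∨ z = b := by
    intro z
    by_cases h : z = P.one
    · exact Or.inl h
    · have : z ∈ Finset.univ.erase P.one := Finset.mem_erase.mpr ⟨h, Finset.mem_univ _⟩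
      rw [hs, Finset.mem_insert, Finset.mem_singleton] at this
      exact Or.inr this
  have huniv : (Finset.univ : Finset A) = insert P.one {a, b} := by
    rw [← hs, Finset.insert_erase (Finset.mem_univ _)]
  have hsum : ∀ f : A → ℝ, ∑ᶠ c, f c = f P.one + f a + f b := by
    intro f
    rw [finsum_eq_sum_of_fintype, huniv, Finset.sum_insert (by simp [Ne.symm ha1, Ne.symm hb1]),
      Finset.sum_pair hab, add_assoc]
  -- rows of the unit
  have hone_row : ∀ z w : A, w ≠ z → P.p P.one z w = 0 := by
    intro z w hwz
    have hs1 : P.p P.one z P.one + P.p P.one z a + P.p P.one z b = 1 :=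
      (hsum (P.p P.one z)).symm.trans (P.sum_eq_one P.one z)
    have h1 := P.one_mul z
    have hq1 := P.p_nonneg P.one z P.one
    have hq2 := P.p_nonneg P.one z a
    have hq3 := P.p_nonneg P.one z b
    rcases htri z with rfl | rfl | rfl <;> rcases htri w with rfl | rfl | rfl <;>
      first | exact absurd rfl hwz | linarith
  have hrow_one : ∀ z w : A, w ≠ z → P.p z P.one w = 0 := by
    intro z w hwz
    have hs1 : P.p z P.one P.one + P.p z P.one a + P.p z P.one b = 1 :=
      (hsum (P.p z P.one)).symm.trans (P.sum_eq_one z P.one)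
    have h1 := P.mul_one z
    have hq1 := P.p_nonneg z P.one P.one
    have hq2 := P.p_nonneg z P.one a
    have hq3 := P.p_nonneg z P.one b
    rcases htri z with rfl | rfl | rfl <;> rcases htri w with rfl | rfl | rfl <;>
      first | exact absurd rfl hwz | linarith
  -- inverse basics
  have hinv1 : P.inv P.one = P.one :=
    (P.inv_unique P.one P.one (by rw [P.one_mul P.one]; norm_num)).symm
  have hinvinv : ∀ z, P.inv (P.inv z) = z := fun z =>
    (P.inv_unique (P.inv z) z (by rw [← P.inv_symm z]; exact P.inv_pos z)).symm
  -- sizes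
  have hs_pos : ∀ z, 0 < P.s z := fun z => one_div_pos.mpr (P.inv_pos z)
  have hs_one : P.s P.one = 1 := by
    rw [ProbabilityGroup.s, hinv1, P.one_mul P.one]; norm_num
  have hrt1 : Real.sqrt (P.s P.one) = ((1:ℕ):ℝ) := by rw [hs_one]; simp
  have hint : ∀ (x y z : A) (nx ny nz : ℕ), 0 < nz → Real.sqrt (P.s x) = nx →
      Real.sqrt (P.s y) = ny → Real.sqrt (P.s z) = nz →
      ∃ m : ℕ, P.p x y z * nx * ny = m * nz := by
    intro x y z nx ny nz hnz hx hy hz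
    obtain ⟨m, hm⟩ := h2.2 x y z
    rw [hx, hy, hz] at hm
    refine ⟨m, ?_⟩
    rw [div_eq_iff (show (nz:ℝ) ≠ 0 from Nat.cast_ne_zero.mpr hnz.ne')] at hm
    exact hm
  obtain ⟨n, hn0, hna⟩ := h2.1 a
  obtain ⟨k, hk0, hkb⟩ := h2.1 b
  have hn0' : (0:ℝ) < n := by exact_mod_cast hn0
  have hk0' : (0:ℝ) < k := by exact_mod_cast hk0
  have hsa : P.s a = (n:ℝ) * n := by
    have h := Real.mul_self_sqrt (le_of_lt (hs_pos a))
    rw [hna] at h; exact h.symm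
  have hsb : P.s b = (k:ℝ) * k := by
    have h := Real.mul_self_sqrt (le_of_lt (hs_pos b))
    rw [hkb] at h; exact h.symm
  -- the inverse of a is a or b
  have hinva_cases : P.inv a = a ∨ P.inv a = b := by
    rcases htri (P.inv a) with h | h | h
    · exfalso; have := hinvinv a; rw [h, hinv1] at this; exact ha1 this.symm
    · exact Or.inl h
    · exact Or.inr h
  rcases hinva_cases with hia | hia
  · -- CASE B : inv a = a, inv b = b; this is the S3 case
    have hib : P.inv b = b := by
      rcases htri (P.inv b) with h | h | h
      · exfalso; have := hinvinv b; rw [h, hinv1] at this; exact hb1 this.symm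
      · exfalso; have := hinvinv b; rw [h, hia] at this; exact hab this
      · exact h
    have hinv_all : ∀ z, P.inv z = z := by
      intro z; rcases htri z with rfl | rfl | rfl
      · exact hinv1
      · exact hia
      · exact hib
    have hswap : ∀ x y c : A, P.p x y c = P.p y x c := fun x y c => by
      rw [P.p_inv x y c, hinv_all, hinv_all, hinv_all]
    -- diagonal values
    have hpaa_pos : 0 < P.p a a P.one := by have := P.inv_pos a; rwa [hia] at this
    have hpbb_pos : 0 < P.p b b P.one := by have := P.inv_pos b; rwa [hib] at this
    have hpaa1 : P.p a a P.one * ((n:ℝ) * n) = 1 := by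
      have hsdef : P.s a = 1 / P.p a a P.one := by rw [ProbabilityGroup.s, hia]
      rw [hsdef] at hsa
      field_simp at hsa
      linarith
    have hpbb1 : P.p b b P.one * ((k:ℝ) * k) = 1 := by
      have hsdef : P.s b = 1 / P.p b b P.one := by rw [ProbabilityGroup.s, hib]
      rw [hsdef] at hsb
      field_simp at hsb
      linarith
    have hpab1 : P.p a b P.one = 0 := by
      by_contra hne
      have hpos : 0 < P.p a b P.one := lt_of_le_of_ne (P.p_nonneg a b P.one) (Ne.symm hne)
      have := P.inv_unique a b hpos
      rw [hia] at this
      exact hab this.symm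
    have hpba1 : P.p b a P.one = 0 := by rw [hswap]; exact hpab1
    -- integrality data
    obtain ⟨m1, hm1⟩ := hint a a a n n n hn0 hna hna hna
    obtain ⟨m2, hm2⟩ := hint a a b n n k hk0 hna hna hkb
    obtain ⟨m3, hm3⟩ := hint b b a k k n hn0 hkb hkb hna
    obtain ⟨m4, hm4⟩ := hint b b b k k k hk0 hkb hkb hkb
    obtain ⟨m5, hm5⟩ := hint a b a n k n hn0 hna hkb hna
    obtain ⟨m6, hm6⟩ := hint a b b n k k hk0 hna hkb hkb
    -- sum equations
    have Saa : P.p a a P.one + P.p a a a + P.p a a b = 1 :=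
      (hsum (P.p a a)).symm.trans (P.sum_eq_one a a)
    have Sbb : P.p b b P.one + P.p b b a + P.p b b b = 1 :=
      (hsum (P.p b b)).symm.trans (P.sum_eq_one b b)
    have Sab : P.p a b P.one + P.p a b a + P.p a b b = 1 :=
      (hsum (P.p a b)).symm.trans (P.sum_eq_one a b)
    -- associativity equations
    have hA := P.assoc b a a P.one
    rw [hsum, hsum] at hA
    rw [hpba1, hone_row a P.one (Ne.symm ha1), hrow_one b P.one (Ne.symm hb1)] at hA
    -- hA : 0 * 0 + p b a a * p a a 1 + p b a b * 0 = 0 * p a a 1 + 0 * p a a a + p b b 1 * p a a b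
    have hAE : P.p a b a * P.p a a P.one = P.p b b P.one * P.p a a b := by
      rw [hswap a b a]; linarith
    have hB := P.assoc a b b P.one
    rw [hsum, hsum] at hB
    rw [hpab1, hone_row b P.one (Ne.symm hb1), hrow_one a P.one (Ne.symm ha1)] at hB
    have hBE : P.p a b b * P.p b b P.one = P.p a a P.one * P.p b b a := by
      linarith
    -- m5 = m2, m6 = m3
    have vaba' : P.p a b a * k = m5 := mul_right_cancel₀ hn0'.ne' (by linear_combination hm5)
    have vabb' : P.p a b b * n = m6 := mul_right_cancel₀ hk0'.ne' (by linear_combination hm6)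
    have hm5m2 : m5 = m2 := by
      have hr : (m5:ℝ) * ((k:ℝ)^2*(n:ℝ)^4) = m2 * ((k:ℝ)^2*(n:ℝ)^4) := by
        linear_combination (-(k:ℝ)^2*(n:ℝ)^4) * vaba' + (-(P.p a b a)*(k:ℝ)^3*(n:ℝ)^4) * hpaa1
          + ((k:ℝ)^3*(n:ℝ)^6) * hAE + ((P.p a a b)*(k:ℝ)*(n:ℝ)^6) * hpbb1
          + ((k:ℝ)*(n:ℝ)^4) * hm2
      have := mul_right_cancel₀ (show ((k:ℝ)^2*(n:ℝ)^4) ≠ 0 by positivity) hr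
      exact_mod_cast this
    have hm6m3 : m6 = m3 := by
      have hr : (m6:ℝ) * ((n:ℝ)^2*(k:ℝ)^2) = m3 * ((n:ℝ)^2*(k:ℝ)^2) := by
        linear_combination (-(n:ℝ)^2*(k:ℝ)^2) * vabb' + (-(P.p a b b)*(n:ℝ)^3*(k:ℝ)^2) * hpbb1
          + ((n:ℝ)^3*(k:ℝ)^4) * hBE + ((P.p b b a)*(n:ℝ)*(k:ℝ)^4) * hpaa1
          + ((n:ℝ)*(k:ℝ)^2) * hm3
      have := mul_right_cancel₀ (show ((n:ℝ)^2*(k:ℝ)^2) ≠ 0 by positivity) hr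
      exact_mod_cast this
    rw [hm5m2] at hm5
    rw [hm6m3] at hm6
    -- the three Diophantine equations
    have E1r : (1:ℝ) + m1*n + m2*k = n*n := by
      linear_combination ((n:ℝ)*n)*Saa - hpaa1 - hm1 - hm2
    have E2r : (1:ℝ) + m3*n + m4*k = k*k := by
      linear_combination ((k:ℝ)*k)*Sbb - hpbb1 - hm3 - hm4
    have E3r : (m2:ℝ)*n + m3*k = n*k := by
      linear_combination ((n:ℝ)*k)*Sab - hm5 - hm6 - ((n:ℝ)*k)*hpab1
    have E1 : 1 + m1*n + m2*k = n*n := by exact_mod_cast E1r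
    have E2 : 1 + m3*n + m4*k = k*k := by exact_mod_cast E2r
    have E3 : m2*n + m3*k = n*k := by exact_mod_cast E3r
    rcases prob_dioph n k m1 m2 m3 m4 hn0 hk0 E1 E2 E3 with
      ⟨hn2, hk1, hM1, hM2, hM3, hM4⟩ | ⟨hn1, hk2, hM1, hM2, hM3, hM4⟩
    · -- n = 2, k = 1 : x = a, y = b
      rw [hn2] at hm1 hm2 hm5 hm6 hpaa1 hsa
      rw [hk1] at hm2 hm3 hm4 hm5 hm6 hpbb1 hsb
      rw [hM1] at hm1
      rw [hM2] at hm2 hm5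
      rw [hM3] at hm3 hm6
      rw [hM4] at hm4
      push_cast at hm1 hm2 hm3 hm4 hm5 hm6 hpaa1 hpbb1 hsa hsb
      have hxspec : P.S3spec a b := by
        refine ⟨by rw [hsa]; norm_num, by rw [hsb]; norm_num, by linarith, by linarith,
          by linarith, by linarith, ?_, by linarith, ?_, hpab1, hpba1, by linarith,
          by linarith, by linarith⟩
        · rw [hswap]; linarith
        · rw [hswap]; linarith
      have hright : ∃ x y : A, x ≠ P.one ∧ y ≠ P.one ∧ x ≠ y ∧
          (∀ z : A, z = P.one ∨ z = x ∨ z = y) ∧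
          P.inv x = x ∧ P.inv y = y ∧ P.S3spec x y :=
        ⟨a, b, ha1, hb1, hab, htri, hia, hib, hxspec⟩
      refine Or.inr ⟨hright, ?_⟩
      rintro ⟨hL, hL2, -⟩
      have := hL2 a
      rw [hsa] at this
      norm_num at this
    · -- n = 1, k = 2 : x = b, y = a
      rw [hn1] at hm1 hm2 hm5 hm6 hpaa1 hsa
      rw [hk2] at hm2 hm3 hm4 hm5 hm6 hpbb1 hsb
      rw [hM1] at hm1
      rw [hM2] at hm2 hm5
      rw [hM3] at hm3 hm6
      rw [hM4] at hm4
      push_cast at hm1 hm2 hm3 hm4 hm5 hm6 hpaa1 hpbb1 hsa hsb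
      have hxspec : P.S3spec b a := by
        refine ⟨by rw [hsb]; norm_num, by rw [hsa]; norm_num, by linarith, by linarith,
          by linarith, ?_, by linarith, ?_, by linarith, hpba1, hpab1, by linarith,
          by linarith, by linarith⟩
        · rw [hswap]; linarith
        · rw [hswap]; linarith
      have hright : ∃ x y : A, x ≠ P.one ∧ y ≠ P.one ∧ x ≠ y ∧
          (∀ z : A, z = P.one ∨ z = x ∨ z = y) ∧
          P.inv x = x ∧ P.inv y = y ∧ P.S3spec x y :=
        ⟨b, a, hb1, ha1, Ne.symm hab, fun z => by rcases htri z with h | h | h <;> tauto,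
          hib, hia, hxspec⟩
      refine Or.inr ⟨hright, ?_⟩
      rintro ⟨hL, hL2, -⟩
      have := hL2 b
      rw [hsb] at this
      norm_num at this
  · -- CASE A : inv a = b (and inv b = a); this is the Z3 case
    have hib : P.inv b = a := by
      have := hinvinv a; rw [hia] at this; exact this
    -- p a b 1 = p b a 1 = 1/(n*n), sizes equal
    have hpab_pos : 0 < P.p a b P.one := by have := P.inv_pos a; rwa [hia] at this
    have hpab1 : P.p a b P.one * ((n:ℝ) * n) = 1 := by
      have hsdef : P.s a = 1 / P.p a b P.one := by rw [ProbabilityGroup.s, hia]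
      rw [hsdef] at hsa
      field_simp at hsa
      linarith
    have hba_ab : P.p b a P.one = P.p a b P.one := by
      have := P.inv_symm a; rw [hia] at this; exact this.symm
    have hsab : P.s b = P.s a := by
      rw [ProbabilityGroup.s, ProbabilityGroup.s, hia, hib, hba_ab]
    have hkn : k = n := by
      have : (k:ℝ) = n := by rw [← hna, ← hkb, hsab]
      exact_mod_cast this
    rw [hkn] at hkb
    -- p a a 1 = 0 and p b b 1 = 0
    have hpaa1 : P.p a a P.one = 0 := by
      by_contra hne
      have hpos : 0 < P.p a a P.one := lt_of_le_of_ne (P.p_nonneg a a P.one) (Ne.symm hne)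
      have := P.inv_unique a a hpos
      rw [hia] at this
      exact hab this
    have hpbb1 : P.p b b P.one = 0 := by
      by_contra hne
      have hpos : 0 < P.p b b P.one := lt_of_le_of_ne (P.p_nonneg b b P.one) (Ne.symm hne)
      have := P.inv_unique b b hpos
      rw [hib] at this
      exact hab this.symm
    -- p a b a = p a b b  (via p_inv)
    have hab_sym : P.p a b a = P.p a b b := by
      have h := P.p_inv a b a
      rw [hib, hia] at h
      exact h
    -- integrality for the a*b row
    obtain ⟨m5, hm5⟩ := hint a b a n n n hn0 hna hkb hna
    obtain ⟨m6, hm6⟩ := hint a b b n n n hn0 hna hkb hkb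
    have Sab : P.p a b P.one + P.p a b a + P.p a b b = 1 :=
      (hsum (P.p a b)).symm.trans (P.sum_eq_one a b)
    have hm5m6 : m5 = m6 := by
      have hr : (m5:ℝ) * n = m6 * n := by rw [← hm5, ← hm6, hab_sym]
      have := mul_right_cancel₀ (show ((n:ℝ)) ≠ 0 by positivity) hr
      exact_mod_cast this
    rw [hm5m6] at hm5
    have Er : (1:ℝ) + m6*n + m6*n = n*n := by
      linear_combination ((n:ℝ)*n)*Sab - hpab1 - hm5 - hm6
    have E : 1 + m6*n + m6*n = n*n := by exact_mod_cast Er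
    obtain ⟨hn1, hm60⟩ := odd_sq_aux n m6 hn0 E
    rw [hn1] at hm5 hm6 hpab1
    rw [hm60] at hm5 hm6
    push_cast at hm5 hm6 hpab1
    -- explicit values in the a*b and b*a rows
    have vab1 : P.p a b P.one = 1 := by linarith
    have vaba : P.p a b a = 0 := by linarith
    have vabb : P.p a b b = 0 := by linarith
    have vba1 : P.p b a P.one = 1 := by rw [hba_ab]; exact vab1
    have Sba : P.p b a P.one + P.p b a a + P.p b a b = 1 :=
      (hsum (P.p b a)).symm.trans (P.sum_eq_one b a)
    have vbaa : P.p b a a = 0 := by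
      have h1 := P.p_nonneg b a a
      have h2 := P.p_nonneg b a b
      linarith
    have vbab : P.p b a b = 0 := by
      have h1 := P.p_nonneg b a a
      linarith
    -- the a*a row : p a a a = 0 via associativity, p a a b = 1
    have Saa : P.p a a P.one + P.p a a a + P.p a a b = 1 :=
      (hsum (P.p a a)).symm.trans (P.sum_eq_one a a)
    have hC := P.assoc a a b P.one
    rw [hsum, hsum] at hC
    rw [hpaa1, hone_row b P.one (Ne.symm hb1), hrow_one a P.one (Ne.symm ha1),
      hpbb1, vab1, vaba, vabb] at hC
    have vaaa : P.p a a a = 0 := by linarith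
    have vaab : P.p a a b = 1 := by linarith
    -- the b*b row via p_inv
    have vbba : P.p b b a = 1 := by
      have h := P.p_inv b b a
      rw [hib, hia] at h
      rw [h]; exact vaab
    have vbbb : P.p b b b = 0 := by
      have h := P.p_inv b b b
      rw [hib] at h
      rw [h]; exact vaaa
    -- sizes all 1
    have hsall : ∀ z, P.s z = 1 := by
      intro z
      rcases htri z with rfl | rfl | rfl
      · exact hs_one
      · rw [hsa, hn1]; norm_num
      · rw [hsab, hsa, hn1]; norm_num
    -- all probabilities are 0 or 1
    have hL1 : ∀ x y z, P.p x y z = 0 ∨ P.p x y z = 1 := by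
      intro x y z
      rcases htri x with rfl | rfl | rfl <;> rcases htri y with rfl | rfl | rfl <;>
        rcases htri z with rfl | rfl | rfl <;>
        first
          | (right; first | exact P.one_mul _ | exact P.mul_one _ | assumption)
          | (left; first
              | assumption
              | exact hone_row _ _ (by tauto)
              | exact hrow_one _ _ (by tauto))
    -- the group structure
    obtain ⟨μ, hμ1, hμ2, hμaa, hμbb, hμab, hμba⟩ :
        ∃ μ : A → A → A, (∀ w, μ P.one w = w) ∧ (∀ z, μ z P.one = z) ∧
          μ a a = b ∧ μ b b = a ∧ μ a b = P.one ∧ μ b a = P.one := by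
      refine ⟨fun z w => if z = P.one then w else if w = P.one then z
        else if z = w then P.inv z else P.one, fun w => by simp, fun z => by
          by_cases h : z = P.one <;> simp [h], ?_, ?_, ?_, ?_⟩
      · simp [ha1, hia]
      · simp [hb1, hib]
      · simp [ha1, hb1, hab]
      · simp [hb1, ha1, Ne.symm hab]
    have hleft : (∀ a b c, P.p a b c = 0 ∨ P.p a b c = 1) ∧ (∀ a, P.s a = 1) ∧
        ∃ mul : A → A → A,
          (∀ a b, P.p a b (mul a b) = 1) ∧
          (∀ a b c, mul (mul a b) c = mul a (mul b c)) ∧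
          (∀ a, mul P.one a = a) ∧ (∀ a, mul a P.one = a) ∧
          (∀ a, mul a (P.inv a) = P.one) ∧
          (∀ g, g ≠ P.one → mul g g ≠ P.one) := by
      refine ⟨hL1, hsall, μ, ?_, ?_, hμ1, hμ2, ?_, ?_⟩
      · intro x y
        rcases htri x with rfl | rfl | rfl <;> rcases htri y with rfl | rfl | rfl <;>
          simp only [hμ1, hμ2, hμaa, hμbb, hμab, hμba] <;>
          first | exact P.one_mul _ | exact P.mul_one _ | assumption
      · intro x y z
        rcases htri x with rfl | rfl | rfl <;> rcases htri y with rfl | rfl | rfl <;>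
          rcases htri z with rfl | rfl | rfl <;>
          simp only [hμ1, hμ2, hμaa, hμbb, hμab, hμba]
      · intro z
        rcases htri z with rfl | rfl | rfl
        · rw [hinv1]; exact hμ1 _
        · rw [hia]; exact hμab
        · rw [hib]; exact hμba
      · intro g hg
        rcases htri g with rfl | rfl | rfl
        · exact absurd rfl hg
        · rw [hμaa]; exact hb1
        · rw [hμbb]; exact ha1
    refine Or.inl ⟨hleft, ?_⟩
    rintro ⟨x, y, hx1, hy1, hxy, hall, hix, hiy, hspec⟩
    have h4 := hspec.1
    rw [hsall x] at h4
    norm_num at h4
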